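/- Reznick's identity: for every real φ and with R = 2^{-12}·[7·C(12,6)], the identity Σ_{k=0}^{6} (cos(kπ/7 + φ)·x + sin(kπ/7 + φ)·y)^{12} = R·(x² + y²)^6 holds as an identity of polynomials in x, y (equivalently, for all real x, y). -/
import Mathlib


open Real

open Complex Finset in
private lemma reznick_geom_zero (m : ℤ) (hm : m ≠ 0) (hme : Even m) (hmb : m.natAbs < 14) :
    ∑ k ∈ range 7, Complex.exp ((m : ℂ) * (↑Real.pi * Complex.I) / 7) ^ k = 0 := by
  have hω7 : Complex.exp ((m : ℂ) * (↑Real.pi * Complex.I) / 7) ^ 7 = 1 := by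
    rw [← Complex.exp_nat_mul]
    push_cast
    rw [show (7 : ℂ) * ((m : ℂ) * (↑Real.pi * Complex.I) / 7) = (m : ℂ) * (↑Real.pi * Complex.I) by
        ring, Complex.exp_int_mul, Complex.exp_pi_mul_I]
    obtain ⟨r, hr⟩ := hme
    rw [hr, show r + r = 2 * r by ring, zpow_mul]
    norm_num
  have hω1 : Complex.exp ((m : ℂ) * (↑Real.pi * Complex.I) / 7) ≠ 1 := by
    intro h
    rw [Complex.exp_eq_one_iff] at h
    obtain ⟨n, hn⟩ := h
    have hpi : (Real.pi : ℂ) ≠ 0 := Complex.ofReal_ne_zero.mpr Real.pi_ne_zero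
    have h2 : (m : ℂ) * (↑Real.pi * Complex.I) = ((14 * n : ℤ) : ℂ) * (↑Real.pi * Complex.I) := by
      push_cast
      linear_combination 7 * hn
    have h3 : (m : ℂ) = ((14 * n : ℤ) : ℂ) :=
      mul_right_cancel₀ (mul_ne_zero hpi Complex.I_ne_zero) h2
    have h4 : m = 14 * n := by exact_mod_cast h3
    omega
  rw [geom_sum_eq hω1, hω7]
  simp

/-- Reznick's identity: for every real `φ`, with `R = 2⁻¹²·7·C(12,6)`,
`Σ_{k=0}^{6} (cos(kπ/7 + φ)·x + sin(kπ/7 + φ)·y)^{12} = R·(x² + y²)^6`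
for all real `x, y`. -/
theorem reznick_identity (φ x y : ℝ) :
    ∑ k ∈ Finset.range 7,
        (Real.cos (k * Real.pi / 7 + φ) * x + Real.sin (k * Real.pi / 7 + φ) * y) ^ 12 =
      (7 * (Nat.choose 12 6 : ℝ) / 2 ^ 12) * (x ^ 2 + y ^ 2) ^ 6 := by
  apply Complex.ofReal_injective
  push_cast
  set z : ℂ := (x : ℂ) + Complex.I * y with hz
  set w : ℂ := (x : ℂ) - Complex.I * y with hw
  have step1 : ∀ k ∈ Finset.range 7,
      (Complex.cos ((k : ℂ) * Real.pi / 7 + φ) * x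
          + Complex.sin ((k : ℂ) * Real.pi / 7 + φ) * y) ^ 12
        = (1 / 2 ^ 12 : ℂ) * ∑ j ∈ Finset.range 13,
            Complex.exp (((k : ℂ) * Real.pi / 7 + φ) * Complex.I) ^ j *
              Complex.exp (-(((k : ℂ) * Real.pi / 7 + φ) * Complex.I)) ^ (12 - j) *
              ((Nat.choose 12 j : ℂ) * (w ^ j * z ^ (12 - j))) := by
    intro k _
    have hcs : Complex.cos ((k : ℂ) * Real.pi / 7 + φ) * x
        + Complex.sin ((k : ℂ) * Real.pi / 7 + φ) * y
        = (Complex.exp (((k : ℂ) * Real.pi / 7 + φ) * Complex.I) * w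
            + Complex.exp (-(((k : ℂ) * Real.pi / 7 + φ) * Complex.I)) * z) / 2 := by
      rw [Complex.cos, Complex.sin, hw, hz]
      ring
    rw [hcs, div_pow, add_pow, Finset.sum_div, Finset.mul_sum]
    refine Finset.sum_congr rfl fun j hj => ?_
    rw [mul_pow, mul_pow]
    ring
  rw [Finset.sum_congr rfl step1, ← Finset.mul_sum, Finset.sum_comm]
  have step2 : ∀ j ∈ Finset.range 13,
      (∑ k ∈ Finset.range 7,
          Complex.exp (((k : ℂ) * Real.pi / 7 + φ) * Complex.I) ^ j *
            Complex.exp (-(((k : ℂ) * Real.pi / 7 + φ) * Complex.I)) ^ (12 - j) *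
            ((Nat.choose 12 j : ℂ) * (w ^ j * z ^ (12 - j))))
        = if j = 6 then 7 * ((Nat.choose 12 6 : ℂ) * (w ^ 6 * z ^ 6)) else 0 := by
    intro j hj
    have hj12 : j ≤ 12 := by
      have := Finset.mem_range.mp hj; omega
    by_cases h6 : j = 6
    · subst h6
      simp only [if_pos rfl]
      have : ∀ k ∈ Finset.range 7,
          Complex.exp (((k : ℂ) * Real.pi / 7 + φ) * Complex.I) ^ 6 *
            Complex.exp (-(((k : ℂ) * Real.pi / 7 + φ) * Complex.I)) ^ (12 - 6) *
            ((Nat.choose 12 6 : ℂ) * (w ^ 6 * z ^ 6))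
          = (Nat.choose 12 6 : ℂ) * (w ^ 6 * z ^ 6) := by
        intro k _
        have : Complex.exp (((k : ℂ) * Real.pi / 7 + φ) * Complex.I) ^ 6 *
            Complex.exp (-(((k : ℂ) * Real.pi / 7 + φ) * Complex.I)) ^ (12 - 6) = 1 := by
          rw [show 12 - 6 = 6 from rfl, ← mul_pow, ← Complex.exp_add]
          simp
        rw [this, one_mul]
      rw [Finset.sum_congr rfl this, Finset.sum_const, Finset.card_range, nsmul_eq_mul]
      norm_num
    · rw [if_neg h6]
      set m : ℤ := 2 * (j : ℤ) - 12 with hm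
      have hEE : ∀ k : ℕ,
          Complex.exp (((k : ℂ) * Real.pi / 7 + φ) * Complex.I) ^ j *
            Complex.exp (-(((k : ℂ) * Real.pi / 7 + φ) * Complex.I)) ^ (12 - j)
          = Complex.exp ((m : ℂ) * ((φ : ℂ) * Complex.I)) *
              Complex.exp ((m : ℂ) * (↑Real.pi * Complex.I) / 7) ^ k := by
        intro k
        rw [← Complex.exp_nat_mul, ← Complex.exp_nat_mul, ← Complex.exp_nat_mul,
          ← Complex.exp_add, ← Complex.exp_add]
        congr 1
        rw [hm]
        push_cast [Nat.cast_sub hj12]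
        ring
      have hsum : ∑ k ∈ Finset.range 7,
          Complex.exp ((m : ℂ) * (↑Real.pi * Complex.I) / 7) ^ k = 0 := by
        apply reznick_geom_zero m
        · omega
        · exact ⟨(j : ℤ) - 6, by omega⟩
        · omega
      calc ∑ k ∈ Finset.range 7,
            Complex.exp (((k : ℂ) * Real.pi / 7 + φ) * Complex.I) ^ j *
              Complex.exp (-(((k : ℂ) * Real.pi / 7 + φ) * Complex.I)) ^ (12 - j) *
              ((Nat.choose 12 j : ℂ) * (w ^ j * z ^ (12 - j)))
          = ∑ k ∈ Finset.range 7,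
              (Complex.exp ((m : ℂ) * ((φ : ℂ) * Complex.I)) *
                ((Nat.choose 12 j : ℂ) * (w ^ j * z ^ (12 - j)))) *
                Complex.exp ((m : ℂ) * (↑Real.pi * Complex.I) / 7) ^ k := by
            refine Finset.sum_congr rfl fun k _ => ?_
            rw [hEE k]; ring
        _ = 0 := by rw [← Finset.mul_sum, hsum, mul_zero]
  rw [Finset.sum_congr rfl step2, Finset.sum_ite_eq' (Finset.range 13) 6]
  have hwz : w * z = (x : ℂ) ^ 2 + (y : ℂ) ^ 2 := by
    rw [hw, hz]
    linear_combination -(y : ℂ) ^ 2 * Complex.I_sq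
  have hwz6 : w ^ 6 * z ^ 6 = ((x : ℂ) ^ 2 + (y : ℂ) ^ 2) ^ 6 := by
    rw [← mul_pow, hwz]
  simp only [Finset.mem_range, if_pos (by norm_num : (6:ℕ) < 13)]
  rw [hwz6]
  ring
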